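/- Let F be a lifting of a degree-one continuous circle map and let 0 ≤ α ≤ ‖F − F_l‖_∞. Then the water function F_α coincides with F at every point x in the complement of Con(F_α), where Con(F_α) is the set of points having a neighbourhood on which F_α is constant. -/

import Mathlib

noncomputable def lowerLift (F : ℝ → ℝ) (x : ℝ) : ℝ := sInf (F '' Set.Ici x)

noncomputable def upperLift (F : ℝ → ℝ) (x : ℝ) : ℝ := sSup (F '' Set.Iic x)

noncomputable def supDiff (F : ℝ → ℝ) : ℝ := ⨆ x : ℝ, (F x - lowerLift F x)

noncomputable def water (F : ℝ → ℝ) (α : ℝ) : ℝ → ℝ :=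
  upperLift (fun y => min (F y) (lowerLift F y + α))

/-- `Con(G)`: the set of points having a neighbourhood on which `G` is constant. -/
def ConSet (G : ℝ → ℝ) : Set ℝ :=
  {x | ∃ U ∈ nhds x, ∀ y ∈ U, G y = G x}

section Aux

variable {F : ℝ → ℝ}

lemma lift_nat (hFd : ∀ x : ℝ, F (x + 1) = F x + 1) (n : ℕ) (x : ℝ) :
    F (x + n) = F x + n := by
  induction n with
  | zero => simp
  | succ k ih =>
    have h : x + ((k : ℝ) + 1) = (x + k) + 1 := by ring
    push_cast
    rw [h, hFd, ih]; ring

lemma exists_lb (hFc : Continuous F) (hFd : ∀ x : ℝ, F (x + 1) = F x + 1) (t : ℝ) :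
    ∃ b, ∀ y ∈ Set.Ici t, b ≤ F y := by
  obtain ⟨z, _, hmin'⟩ := (isCompact_Icc : IsCompact (Set.Icc (t-1) t)).exists_isMinOn
    ⟨t, ⟨by linarith, le_rfl⟩⟩ hFc.continuousOn
  have hmin : ∀ w ∈ Set.Icc (t-1) t, F z ≤ F w := fun w hw => hmin' hw
  refine ⟨F z, fun y hy => ?_⟩
  have hy' : t ≤ y := hy
  set n : ℕ := ⌈y - t⌉₊ with hn
  have h1 : y - t ≤ n := Nat.le_ceil _
  have h2 : (n : ℝ) < y - t + 1 := by
    have := Nat.ceil_lt_add_one (by linarith : (0:ℝ) ≤ y - t)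
    simpa [hn] using this
  have hmem : y - n ∈ Set.Icc (t-1) t := ⟨by linarith, by linarith⟩
  have key : F (y - n + n) = F (y - n) + n := lift_nat hFd n (y - n)
  have e : y - (n:ℝ) + n = y := by ring
  rw [e] at key
  have hn0 : (0:ℝ) ≤ n := Nat.cast_nonneg n
  have := hmin _ hmem
  linarith

lemma exists_ub (hFc : Continuous F) (hFd : ∀ x : ℝ, F (x + 1) = F x + 1) (t : ℝ) :
    ∃ b, ∀ y ∈ Set.Iic t, F y ≤ b := by
  obtain ⟨z, _, hmax'⟩ := (isCompact_Icc : IsCompact (Set.Icc t (t+1))).exists_isMaxOn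
    ⟨t, ⟨le_rfl, by linarith⟩⟩ hFc.continuousOn
  have hmax : ∀ w ∈ Set.Icc t (t+1), F w ≤ F z := fun w hw => hmax' hw
  refine ⟨F z, fun y hy => ?_⟩
  have hy' : y ≤ t := hy
  set n : ℕ := ⌈t - y⌉₊ with hn
  have h1 : t - y ≤ n := Nat.le_ceil _
  have h2 : (n : ℝ) < t - y + 1 := by
    have := Nat.ceil_lt_add_one (by linarith : (0:ℝ) ≤ t - y)
    simpa [hn] using this
  have hmem : y + n ∈ Set.Icc t (t+1) := ⟨by linarith, by linarith⟩
  have key : F (y + n) = F y + n := lift_nat hFd n y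
  have hn0 : (0:ℝ) ≤ n := Nat.cast_nonneg n
  have := hmax _ hmem
  linarith

lemma bddBelow_img (hFc : Continuous F) (hFd : ∀ x : ℝ, F (x + 1) = F x + 1) (t : ℝ) :
    BddBelow (F '' Set.Ici t) := by
  obtain ⟨b, hb⟩ := exists_lb hFc hFd t
  exact ⟨b, by rintro v ⟨y, hy, rfl⟩; exact hb y hy⟩

lemma img_ne (t : ℝ) : (F '' Set.Ici t).Nonempty := ⟨F t, t, Set.mem_Ici.2 le_rfl, rfl⟩

lemma lowerLift_le (hFc : Continuous F) (hFd : ∀ x : ℝ, F (x + 1) = F x + 1)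
    {t y : ℝ} (h : t ≤ y) : lowerLift F t ≤ F y :=
  csInf_le (bddBelow_img hFc hFd t) ⟨y, Set.mem_Ici.2 h, rfl⟩

lemma lowerLift_mono (hFc : Continuous F) (hFd : ∀ x : ℝ, F (x + 1) = F x + 1) :
    Monotone (lowerLift F) := fun a b hab =>
  csInf_le_csInf (bddBelow_img hFc hFd a) (img_ne b)
    (Set.image_mono (Set.Ici_subset_Ici.2 hab))

lemma water_eq (α t : ℝ) :
    water F α t = sSup ((fun y => min (F y) (lowerLift F y + α)) '' Set.Iic t) := rfl

lemma bddAbove_G (hFc : Continuous F) (hFd : ∀ x : ℝ, F (x + 1) = F x + 1) (α t : ℝ) :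
    BddAbove ((fun y => min (F y) (lowerLift F y + α)) '' Set.Iic t) := by
  obtain ⟨b, hb⟩ := exists_ub hFc hFd t
  exact ⟨b, by rintro v ⟨y, hy, rfl⟩; exact le_trans (min_le_left _ _) (hb y hy)⟩

lemma le_water (hFc : Continuous F) (hFd : ∀ x : ℝ, F (x + 1) = F x + 1)
    (α : ℝ) {t y : ℝ} (h : y ≤ t) :
    min (F y) (lowerLift F y + α) ≤ water F α t :=
  le_csSup (bddAbove_G hFc hFd α t) ⟨y, Set.mem_Iic.2 h, rfl⟩

lemma water_le {α t b : ℝ}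
    (h : ∀ y ≤ t, min (F y) (lowerLift F y + α) ≤ b) : water F α t ≤ b :=
  csSup_le ⟨_, t, Set.mem_Iic.2 le_rfl, rfl⟩ (by rintro v ⟨y, hy, rfl⟩; exact h y hy)

lemma water_mono (hFc : Continuous F) (hFd : ∀ x : ℝ, F (x + 1) = F x + 1) (α : ℝ) :
    Monotone (water F α) := fun a b hab =>
  water_le (fun y hy => le_water hFc hFd α (le_trans hy hab))

lemma con_of (hFc : Continuous F) (hFd : ∀ x : ℝ, F (x + 1) = F x + 1)
    (α x δ : ℝ) (hδ : 0 < δ)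
    (h : water F α (x + δ) ≤ water F α (x - δ)) : x ∈ ConSet (water F α) := by
  have mono := water_mono hFc hFd α
  refine ⟨Set.Ioo (x - δ) (x + δ), isOpen_Ioo.mem_nhds ⟨by linarith, by linarith⟩,
    fun y hy => ?_⟩
  have e : ∀ z ∈ Set.Ioo (x - δ) (x + δ), water F α z = water F α (x - δ) := fun z hz =>
    le_antisymm (le_trans (mono hz.2.le) h) (mono hz.1.le)
  rw [e y hy, e x ⟨by linarith, by linarith⟩]

lemma nbhd_gt (hFc : Continuous F) {x m : ℝ} (h : m < F x) :
    ∃ δ > 0, ∀ y ∈ Set.Icc (x - δ) (x + δ), m < F y := by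
  have hmem : {y : ℝ | m < F y} ∈ nhds x :=
    (isOpen_lt continuous_const hFc).mem_nhds h
  obtain ⟨ε, hε, hball⟩ := Metric.mem_nhds_iff.1 hmem
  refine ⟨ε/2, by linarith, fun y hy => ?_⟩
  have : y ∈ Metric.ball x ε := by
    rw [Metric.mem_ball, Real.dist_eq]
    have := hy.1; have := hy.2
    rw [abs_lt]; constructor <;> linarith
  exact hball this

lemma nbhd_lt (hFc : Continuous F) {x m : ℝ} (h : F x < m) :
    ∃ δ > 0, ∀ y ∈ Set.Icc (x - δ) (x + δ), F y < m := by
  have hmem : {y : ℝ | F y < m} ∈ nhds x :=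
    (isOpen_lt hFc continuous_const).mem_nhds h
  obtain ⟨ε, hε, hball⟩ := Metric.mem_nhds_iff.1 hmem
  refine ⟨ε/2, by linarith, fun y hy => ?_⟩
  have : y ∈ Metric.ball x ε := by
    rw [Metric.mem_ball, Real.dist_eq]
    have := hy.1; have := hy.2
    rw [abs_lt]; constructor <;> linarith
  exact hball this

/-- Case A: if `F x > lowerLift F x + α`, then `water F α` is locally constant at `x`. -/
lemma caseA (hFc : Continuous F) (hFd : ∀ x : ℝ, F (x + 1) = F x + 1)
    {α : ℝ} (hα0 : 0 ≤ α) {x : ℝ} (hA : lowerLift F x + α < F x) :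
    x ∈ ConSet (water F α) := by
  set c := lowerLift F x with hc
  set m := (F x + (c + α)) / 2 with hm
  have hm1 : c + α < m := by rw [hm]; linarith
  have hm2 : m < F x := by rw [hm]; linarith
  obtain ⟨δ, hδ, hbig⟩ := nbhd_gt hFc hm2
  -- lowerLift F is constant (= c) on [x-δ, x+δ]
  have step1 : lowerLift F (x + δ) ≤ c := by
    have key : min m (lowerLift F (x + δ)) ≤ c := by
      refine le_csInf (img_ne x) ?_
      rintro b ⟨z, hz, rfl⟩
      rcases le_or_gt z (x + δ) with hzd | hzd
      · have hxz := Set.mem_Ici.1 hz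
        exact le_trans (min_le_left _ _)
          (le_of_lt (hbig z ⟨by linarith, hzd⟩))
      · exact le_trans (min_le_right _ _) (lowerLift_le hFc hFd hzd.le)
    rcases le_total (lowerLift F (x + δ)) m with h' | h'
    · rwa [min_eq_right h'] at key
    · rw [min_eq_left h'] at key; linarith
  have step2 : ∀ y ∈ Set.Icc (x - δ) (x + δ), lowerLift F y = c := by
    intro y hy
    refine le_antisymm (le_trans (lowerLift_mono hFc hFd hy.2) step1) ?_
    refine le_csInf (img_ne y) ?_
    rintro b ⟨z, hz, rfl⟩
    rcases le_or_gt x z with hxz | hxz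
    · exact lowerLift_le hFc hFd hxz
    · have hyz := Set.mem_Ici.1 hz
      have hy1 := hy.1
      have : m < F z := hbig z ⟨by linarith, by linarith⟩
      linarith
  have step3 : ∀ y ∈ Set.Icc (x - δ) (x + δ),
      min (F y) (lowerLift F y + α) = c + α := by
    intro y hy
    rw [step2 y hy, min_eq_right (le_of_lt (lt_trans hm1 (hbig y hy)))]
  refine con_of hFc hFd α x δ hδ ?_
  refine water_le (fun y hy => ?_)
  rcases le_or_gt y (x - δ) with h' | h'
  · exact le_water hFc hFd α h'
  · rw [step3 y ⟨h'.le, hy⟩]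
    have := le_water hFc hFd α (le_rfl : x - δ ≤ x - δ)
    rwa [step3 (x - δ) ⟨le_rfl, by linarith⟩] at this

/-- Case B: if `water F α x > F x`, then `water F α` is locally constant at `x`. -/
lemma caseB (hFc : Continuous F) (hFd : ∀ x : ℝ, F (x + 1) = F x + 1)
    {α x : ℝ} (hB : F x < water F α x) : x ∈ ConSet (water F α) := by
  set m := (F x + water F α x) / 2 with hm
  have hm1 : F x < m := by rw [hm]; linarith
  have hm2 : m < water F α x := by rw [hm]; linarith
  obtain ⟨δ, hδ, hsmall⟩ := nbhd_lt hFc hm1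
  have key : ∀ t ∈ Set.Icc (x - δ) (x + δ),
      water F α t ≤ max (water F α (x - δ)) m := by
    intro t ht
    refine water_le (fun y hy => ?_)
    rcases le_or_gt y (x - δ) with h' | h'
    · exact le_trans (le_water hFc hFd α h') (le_max_left _ _)
    · have : F y < m := hsmall y ⟨h'.le, le_trans hy ht.2⟩
      exact le_trans (min_le_left _ _) (le_trans this.le (le_max_right _ _))
  have hx1 : water F α x ≤ water F α (x - δ) := by
    have := key x ⟨by linarith, by linarith⟩
    rcases max_cases (water F α (x - δ)) m with ⟨he, _⟩ | ⟨he, _⟩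
    · rwa [he] at this
    · rw [he] at this; linarith
  refine con_of hFc hFd α x δ hδ ?_
  have := key (x + δ) ⟨by linarith, le_rfl⟩
  rcases max_cases (water F α (x - δ)) m with ⟨he, _⟩ | ⟨he, _⟩
  · rwa [he] at this
  · rw [he] at this; linarith

end Aux

theorem water_eq_outside_con (F : ℝ → ℝ) (hFc : Continuous F)
    (hFd : ∀ x : ℝ, F (x + 1) = F x + 1)
    (α : ℝ) (hα : α ∈ Set.Icc 0 (supDiff F)) :
    ∀ x : ℝ, x ∉ ConSet (water F α) → water F α x = F x := by
  intro x hx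
  by_cases hA : lowerLift F x + α < F x
  · exact absurd (caseA hFc hFd hα.1 hA) hx
  by_cases hB : F x < water F α x
  · exact absurd (caseB hFc hFd hB) hx
  push_neg at hA hB
  have h1 : F x ≤ water F α x := by
    have := le_water hFc hFd α (le_rfl : x ≤ x)
    rwa [min_eq_left hA] at this
  exact le_antisymm hB h1
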